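/- arXiv:2309.16115 — 10 statements merged into one kernel-verified Lean document; each statement's English description precedes it below -/
import Mathlib

section
/- In the two-model observation model, the posterior obtained by conditioning on y1 = 1 and y2 = 2 is the normalized harmonic mean of p1 and p2: for every x ∈ X, p̃(x | y1 = 1, y2 = 2) = [p1(x)p2(x)/(p1(x)+p2(x))] / Σ_{x'∈X} [p1(x')p2(x')/(p1(x')+p2(x'))]. -/
open Finset

lemma term_eq (a b : ℝ) :
    (a + b) / 2 * (a / (a + b)) * (b / (a + b)) = a * b / (a + b) / 2 := by
  rcases eq_or_ne (a + b) 0 with h | h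
  · simp [h]
  · field_simp

/-- In the two-model observation model with prior
`p̃(x) = (p1 x + p2 x)/2` and likelihoods `p̃(y_k = i | x) = p_i x / (p1 x + p2 x)`
(with the convention that ratios with zero denominator are `0`, which is the
Lean convention for real division), the posterior obtained by conditioning on
`y1 = 1` and `y2 = 2` equals the normalized harmonic mean of `p1` and `p2`. -/
theorem harmonic_mean_posterior
    {X : Type*} [Fintype X] [Nonempty X] (p1 p2 : X → ℝ)
    (h1nn : ∀ x, 0 ≤ p1 x) (h2nn : ∀ x, 0 ≤ p2 x)
    (h1sum : ∑ x, p1 x = 1) (h2sum : ∑ x, p2 x = 1)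
    (hsupp : ∃ x, 0 < p1 x ∧ 0 < p2 x) :
    ∀ x : X,
      ((p1 x + p2 x) / 2 * (p1 x / (p1 x + p2 x)) * (p2 x / (p1 x + p2 x))) /
          (∑ x', (p1 x' + p2 x') / 2 * (p1 x' / (p1 x' + p2 x')) *
            (p2 x' / (p1 x' + p2 x'))) =
        (p1 x * p2 x / (p1 x + p2 x)) /
          (∑ x', p1 x' * p2 x' / (p1 x' + p2 x')) := by
  intro x
  have hterm : ∀ y : X, (p1 y + p2 y) / 2 * (p1 y / (p1 y + p2 y)) *
      (p2 y / (p1 y + p2 y)) = p1 y * p2 y / (p1 y + p2 y) / 2 := fun y =>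
    term_eq (p1 y) (p2 y)
  simp only [hterm]
  rw [← Finset.sum_div]
  rw [div_div_div_cancel_right₀ two_ne_zero]
end

section
/- In the two-model observation model, the posterior obtained by conditioning on y1 = 1 and y2 = 1 is the normalized contrast of p1 with p2: for every x ∈ X, p̃(x | y1 = 1, y2 = 1) = [p1(x)²/(p1(x)+p2(x))] / Σ_{x'∈X} [p1(x')²/(p1(x')+p2(x'))]. -/
open Finset

/-- In the two-model observation model with prior
`p̃(x) = (p1 x + p2 x)/2` and likelihoods `p̃(y_k = i | x) = p_i x / (p1 x + p2 x)`
(ratios with zero denominator are `0`, matching Lean's real division), the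
posterior obtained by conditioning on `y1 = 1` and `y2 = 1` equals the
normalized contrast of `p1` with `p2`. -/
theorem contrast_posterior
    {X : Type*} [Fintype X] [Nonempty X] (p1 p2 : X → ℝ)
    (h1nn : ∀ x, 0 ≤ p1 x) (h2nn : ∀ x, 0 ≤ p2 x)
    (h1sum : ∑ x, p1 x = 1) (h2sum : ∑ x, p2 x = 1) :
    ∀ x : X,
      ((p1 x + p2 x) / 2 * (p1 x / (p1 x + p2 x)) * (p1 x / (p1 x + p2 x))) /
          (∑ x', (p1 x' + p2 x') / 2 * (p1 x' / (p1 x' + p2 x')) *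
            (p1 x' / (p1 x' + p2 x'))) =
        ((p1 x) ^ 2 / (p1 x + p2 x)) /
          (∑ x', (p1 x') ^ 2 / (p1 x' + p2 x')) := by
  have key : ∀ x : X,
      (p1 x + p2 x) / 2 * (p1 x / (p1 x + p2 x)) * (p1 x / (p1 x + p2 x)) =
        (p1 x) ^ 2 / (p1 x + p2 x) / 2 := by
    intro x
    rcases eq_or_ne (p1 x + p2 x) 0 with h | h
    · have h1 : p1 x = 0 := le_antisymm (by nlinarith [h2nn x]) (h1nn x)
      simp [h, h1]
    · field_simp
  intro x
  rw [key x]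
  have hsum : (∑ x', (p1 x' + p2 x') / 2 * (p1 x' / (p1 x' + p2 x')) *
      (p1 x' / (p1 x' + p2 x'))) = (∑ x', (p1 x') ^ 2 / (p1 x' + p2 x')) / 2 := by
    rw [Finset.sum_div]
    exact Finset.sum_congr rfl fun x' _ => key x'
  rw [hsum]
  rcases eq_or_ne (∑ x', (p1 x') ^ 2 / (p1 x' + p2 x')) 0 with h | h
  · simp [h]
  · rw [div_div_div_comm]
    norm_num
end

section
/- In the α-parameterized two-model observation model, conditioning on y1 = 1 and y2 = 2 gives the harmonic interpolation: for every x ∈ X, p̃(x | y1 = 1, y2 = 2; α) = [p1(x)p2(x)/(α p1(x) + (1−α) p2(x))] / Σ_{x'∈X} [p1(x')p2(x')/(α p1(x') + (1−α) p2(x'))]. -/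
open Finset

/-- In the `α`-parameterized two-model observation model with prior
`p̃(x) = (p1 x + p2 x)/2`, first likelihood `p̃(y1 = i | x) = p_i x / (p1 x + p2 x)` and
second likelihood `p̃(y2 = 2 | x; α) = (1-α) p2 x / (α p1 x + (1-α) p2 x)`
(ratios with zero denominator are `0`), conditioning on `y1 = 1` and `y2 = 2`
gives the harmonic interpolation of `p1` and `p2`. -/
theorem harmonic_interpolation_posterior
    {X : Type*} [Fintype X] [Nonempty X] (p1 p2 : X → ℝ)
    (h1nn : ∀ x, 0 ≤ p1 x) (h2nn : ∀ x, 0 ≤ p2 x)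
    (h1sum : ∑ x, p1 x = 1) (h2sum : ∑ x, p2 x = 1)
    (hsupp : ∃ x, 0 < p1 x ∧ 0 < p2 x)
    (α : ℝ) (hα : α ∈ Set.Ioo (0 : ℝ) 1) :
    ∀ x : X,
      ((p1 x + p2 x) / 2 * (p1 x / (p1 x + p2 x)) *
            ((1 - α) * p2 x / (α * p1 x + (1 - α) * p2 x))) /
          (∑ x', (p1 x' + p2 x') / 2 * (p1 x' / (p1 x' + p2 x')) *
            ((1 - α) * p2 x' / (α * p1 x' + (1 - α) * p2 x'))) =
        (p1 x * p2 x / (α * p1 x + (1 - α) * p2 x)) /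
          (∑ x', p1 x' * p2 x' / (α * p1 x' + (1 - α) * p2 x')) := by
  obtain ⟨hα0, hα1⟩ := hα
  have h1α : (0:ℝ) < 1 - α := by linarith
  have hc : (1 - α) / 2 ≠ 0 := by positivity
  have key : ∀ x : X,
      (p1 x + p2 x) / 2 * (p1 x / (p1 x + p2 x)) *
        ((1 - α) * p2 x / (α * p1 x + (1 - α) * p2 x)) =
      (1 - α) / 2 * (p1 x * p2 x / (α * p1 x + (1 - α) * p2 x)) := by
    intro x
    rcases eq_or_lt_of_le (h1nn x) with h1 | h1
    · simp [← h1]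
    · have h2 := h2nn x
      have hs : p1 x + p2 x ≠ 0 := by positivity
      have hd : α * p1 x + (1 - α) * p2 x ≠ 0 := by positivity
      field_simp
  intro x
  rw [key x]
  have : (∑ x', (p1 x' + p2 x') / 2 * (p1 x' / (p1 x' + p2 x')) *
      ((1 - α) * p2 x' / (α * p1 x' + (1 - α) * p2 x'))) =
      (1 - α) / 2 * ∑ x', p1 x' * p2 x' / (α * p1 x' + (1 - α) * p2 x') := by
    rw [mul_sum]
    exact Finset.sum_congr rfl fun x' _ => key x'
  rw [this, mul_div_mul_left _ _ hc]
end

section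
/- In the α-parameterized two-model observation model, conditioning on y1 = 1 and y2 = 1 gives the parameterized contrast: for every x ∈ X, p̃(x | y1 = 1, y2 = 1; α) = [p1(x)²/(α p1(x) + (1−α) p2(x))] / Σ_{x'∈X} [p1(x')²/(α p1(x') + (1−α) p2(x'))]. -/
open Finset

/-- In the `α`-parameterized two-model observation model with prior
`p̃(x) = (p1 x + p2 x)/2`, first likelihood `p̃(y1 = i | x) = p_i x / (p1 x + p2 x)` and
second likelihood `p̃(y2 = 1 | x; α) = α p1 x / (α p1 x + (1-α) p2 x)`
(ratios with zero denominator are `0`), conditioning on `y1 = 1` and `y2 = 1`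
gives the parameterized contrast of `p1` with `p2`. -/
theorem parameterized_contrast_posterior
    {X : Type*} [Fintype X] [Nonempty X] (p1 p2 : X → ℝ)
    (h1nn : ∀ x, 0 ≤ p1 x) (h2nn : ∀ x, 0 ≤ p2 x)
    (h1sum : ∑ x, p1 x = 1) (h2sum : ∑ x, p2 x = 1)
    (hp1ne : ∃ x, p1 x ≠ 0)
    (α : ℝ) (hα : α ∈ Set.Ioo (0 : ℝ) 1) :
    ∀ x : X,
      ((p1 x + p2 x) / 2 * (p1 x / (p1 x + p2 x)) *
            (α * p1 x / (α * p1 x + (1 - α) * p2 x))) /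
          (∑ x', (p1 x' + p2 x') / 2 * (p1 x' / (p1 x' + p2 x')) *
            (α * p1 x' / (α * p1 x' + (1 - α) * p2 x'))) =
        ((p1 x) ^ 2 / (α * p1 x + (1 - α) * p2 x)) /
          (∑ x', (p1 x') ^ 2 / (α * p1 x' + (1 - α) * p2 x')) := by
  have key : ∀ x : X,
      (p1 x + p2 x) / 2 * (p1 x / (p1 x + p2 x)) *
        (α * p1 x / (α * p1 x + (1 - α) * p2 x)) =
      (α / 2) * ((p1 x) ^ 2 / (α * p1 x + (1 - α) * p2 x)) := by
    intro x
    by_cases h : p1 x + p2 x = 0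
    · have h1 : p1 x = 0 := by nlinarith [h1nn x, h2nn x]
      simp [h1]
    · by_cases hD : α * p1 x + (1 - α) * p2 x = 0
      · simp [hD]
      · field_simp
  intro x
  rw [key x]
  have hsum : (∑ x', (p1 x' + p2 x') / 2 * (p1 x' / (p1 x' + p2 x')) *
      (α * p1 x' / (α * p1 x' + (1 - α) * p2 x')))
      = (α / 2) * ∑ x', (p1 x') ^ 2 / (α * p1 x' + (1 - α) * p2 x') := by
    rw [Finset.mul_sum]
    exact Finset.sum_congr rfl fun x' _ => key x'
  rw [hsum, mul_div_mul_left _ _ (ne_of_gt (by linarith [hα.1] : (0:ℝ) < α / 2))]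
end

section
/- In the m-model, n-observation model, the posterior over x given observations y1 = i1, …, yn = in is, for every x ∈ X, p̃(x | y1 = i1, …, yn = in) = [ (Π_{k=1}^n p_{i_k}(x)) / (Σ_{j=1}^m p_j(x))^{n−1} ] / Σ_{x'∈X} [ (Π_{k=1}^n p_{i_k}(x')) / (Σ_{j=1}^m p_j(x'))^{n−1} ]. -/
open Finset

/-- In the `m`-model, `n`-observation model with prior
`p̃(x) = (1/m) ∑ j, p j x` and likelihoods `p̃(y_k = i | x) = p i x / ∑ j, p j x`
(ratios with zero denominator are `0`), the posterior over `x` given the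
observations `y_k = ι k` for `k = 1, …, n` is the normalized composition
`(∏ k, p (ι k) x) / (∑ j, p j x)^(n-1)`. -/
theorem composition_posterior
    {X : Type*} [Fintype X] [Nonempty X] (m n : ℕ) (hm : 0 < m) (hn : 0 < n)
    (p : Fin m → X → ℝ)
    (hnn : ∀ i x, 0 ≤ p i x) (hsum : ∀ i, ∑ x, p i x = 1)
    (ι : Fin n → Fin m)
    (hZ : 0 < ∑ x, (∏ k, p (ι k) x) / (∑ j, p j x) ^ (n - 1)) :
    ∀ x : X,
      (((1 / (m : ℝ)) * ∑ j, p j x) * ∏ k, (p (ι k) x / ∑ j, p j x)) /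
          (∑ x', ((1 / (m : ℝ)) * ∑ j, p j x') * ∏ k, (p (ι k) x' / ∑ j, p j x')) =
        ((∏ k, p (ι k) x) / (∑ j, p j x) ^ (n - 1)) /
          (∑ x', (∏ k, p (ι k) x') / (∑ j, p j x') ^ (n - 1)) := by
  have key : ∀ x : X,
      ((1 / (m : ℝ)) * ∑ j, p j x) * ∏ k, (p (ι k) x / ∑ j, p j x)
        = (1 / (m : ℝ)) * ((∏ k, p (ι k) x) / (∑ j, p j x) ^ (n - 1)) := by
    intro x
    by_cases hS : (∑ j, p j x) = 0
    · have hp : p (ι ⟨0, hn⟩) x = 0 := by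
        by_contra h
        have : 0 < ∑ j, p j x :=
          Finset.sum_pos' (fun j _ => hnn j x)
            ⟨ι ⟨0, hn⟩, Finset.mem_univ _, lt_of_le_of_ne (hnn _ x) (Ne.symm h)⟩
        exact this.ne' hS
      have h1 : ∏ k, (p (ι k) x / ∑ j, p j x) = 0 :=
        Finset.prod_eq_zero (Finset.mem_univ (⟨0, hn⟩ : Fin n)) (by simp [hp])
      have h2 : ∏ k, p (ι k) x = 0 :=
        Finset.prod_eq_zero (Finset.mem_univ (⟨0, hn⟩ : Fin n)) hp
      simp [h1, h2]
    · rw [Finset.prod_div_distrib, Finset.prod_const, Finset.card_univ,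
        Fintype.card_fin]
      field_simp
      ring_nf
      rw [← pow_succ', show n - 1 + 1 = n from by omega]
  intro x
  rw [key x]
  have hsum' : (∑ x', ((1 / (m : ℝ)) * ∑ j, p j x') * ∏ k, (p (ι k) x' / ∑ j, p j x'))
      = (1 / (m : ℝ)) * ∑ x', (∏ k, p (ι k) x') / (∑ j, p j x') ^ (n - 1) := by
    rw [Finset.mul_sum]; exact Finset.sum_congr rfl fun x' _ => key x'
  rw [hsum']
  have hm' : (1 / (m : ℝ)) ≠ 0 := by positivity
  rw [mul_div_mul_left _ _ hm']
end

section
/- (GFlowNet mixture policy.) Let p_{1,F}, …, p_{m,F} be forward policies on a common GFlowNet domain with induced state-visitation functions p_1, …, p_m, and let ω_1, …, ω_m ≥ 0 with Σ_i ω_i = 1 satisfy Σ_j ω_j p_j(s) > 0 for every state s. Define the mixture policy p_{M,F}(s' | s) = Σ_{i=1}^m [ω_i p_i(s) / Σ_{j=1}^m ω_j p_j(s)] p_{i,F}(s' | s). Then the state-visitation function p_M induced by p_{M,F} satisfies p_M(s) = Σ_{i=1}^m ω_i p_i(s) for every state s; in particular the distribution over terminal states induced by p_{M,F} is the mixture Σ_i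 ω_i p_i(x). -/
open Finset

/-- A state is terminal if it has no outgoing edges. -/
def IsTerminal {S : Type*} (A : S → S → Prop) (s : S) : Prop := ∀ s', ¬ A s s'

/-- A GFlowNet domain: a finite set of states with an edge relation `A` whose
transitive closure is irreflexive (a DAG), an initial state `s0` with no
incoming edges, and `s0` not terminal. -/
def IsGFlowNetDomain {S : Type*} [Fintype S] (A : S → S → Prop) (s0 : S) : Prop :=
  Irreflexive (Relation.TransGen A) ∧ (∀ s, ¬ A s s0) ∧ ¬ IsTerminal A s0

/-- A forward policy: nonnegative, supported on edges, and summing to one over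
the successors of every non-terminal state. -/
def IsForwardPolicy {S : Type*} [Fintype S] (A : S → S → Prop) [DecidableRel A]
    (pF : S → S → ℝ) : Prop :=
  (∀ s s', 0 ≤ pF s s') ∧ (∀ s s', ¬ A s s' → pF s s' = 0) ∧
    (∀ s, ¬ IsTerminal A s → ∑ s' ∈ univ.filter (fun s' => A s s'), pF s s' = 1)

/-- The state-visitation function induced by a forward policy: `p s0 = 1` and
`p s = ∑_{s* : (s*,s) ∈ A} p s* * pF s* s` for every `s ≠ s0`. -/
def IsVisitation {S : Type*} [Fintype S] (A : S → S → Prop) [DecidableRel A]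
    (s0 : S) (pF : S → S → ℝ) (p : S → ℝ) : Prop :=
  p s0 = 1 ∧
    ∀ s, s ≠ s0 → p s = ∑ sp ∈ univ.filter (fun sp => A sp s), p sp * pF sp s

/-- **GFlowNet mixture policy, Proposition 1.**
If forward policies `pF i` induce state-visitation functions `p i`, and
`ω` are mixture weights with `∑ j, ω j * p j s > 0` for every state, then the
mixture policy `p_{M,F}(s' | s) = ∑ i, (ω i * p i s / ∑ j, ω j * p j s) * pF i s s'`
induces the state-visitation function `s ↦ ∑ i, ω i * p i s`; in particular,
the induced distribution over terminal states is the mixture `∑ i, ω i * p i x`. -/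
theorem gflownet_mixture_policy
    {S : Type*} [Fintype S] (A : S → S → Prop) [DecidableRel A] (s0 : S)
    (hdom : IsGFlowNetDomain A s0)
    (m : ℕ) (pF : Fin m → S → S → ℝ) (p : Fin m → S → ℝ)
    (hpF : ∀ i, IsForwardPolicy A (pF i))
    (hp : ∀ i, IsVisitation A s0 (pF i) (p i))
    (ω : Fin m → ℝ) (hω : ∀ i, 0 ≤ ω i) (hωsum : ∑ i, ω i = 1)
    (hpos : ∀ s, 0 < ∑ j, ω j * p j s)
    (pM : S → ℝ)
    (hpM : IsVisitation A s0
      (fun s s' => ∑ i, (ω i * p i s / ∑ j, ω j * p j s) * pF i s s') pM) :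
    ∀ s, pM s = ∑ i, ω i * p i s := by
  obtain ⟨hirr, -, -⟩ := hdom
  have htrans : Transitive (Relation.TransGen A) := fun a b c h1 h2 => h1.trans h2
  have hwf : WellFounded (Relation.TransGen A) := by
    have h1 : IsTrans S (Relation.TransGen A) := ⟨htrans⟩
    have h2 : IsIrrefl S (Relation.TransGen A) := ⟨hirr⟩
    exact Finite.wellFounded_of_trans_of_irrefl _
  intro s
  induction s using hwf.induction with
  | _ s ih =>
    by_cases hs : s = s0
    · subst hs
      rw [hpM.1]
      simp only [fun i => (hp i).1, mul_one, hωsum]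
    · rw [hpM.2 s hs]
      have key : ∀ sp ∈ univ.filter (fun sp => A sp s),
          pM sp * (∑ i, (ω i * p i sp / ∑ j, ω j * p j sp) * pF i sp s)
            = ∑ i, ω i * p i sp * pF i sp s := by
        intro sp hsp
        rw [ih sp (Relation.TransGen.single (mem_filter.mp hsp).2), Finset.mul_sum]
        refine Finset.sum_congr rfl fun i _ => ?_
        have hQ : (∑ j, ω j * p j sp) ≠ 0 := (hpos sp).ne'
        field_simp
      rw [Finset.sum_congr rfl key, Finset.sum_comm]
      refine Finset.sum_congr rfl fun i _ => ?_
      rw [(hp i).2 s hs, Finset.mul_sum]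
      exact Finset.sum_congr rfl fun sp _ => by ring
end

section
/- (GFlowNet classifier consistency, Proposition 2 claim 1.) Let p_F be a forward policy on a GFlowNet domain with induced state-visitation function p satisfying p(s) > 0 for all s, let p_B be a backward policy satisfying the detailed balance condition p(s) p_F(s' | s) = p(s') p_B(s | s') for every edge (s, s') ∈ A, and let Y be a finite label set with terminal conditionals q(y | x) ≥ 0 for x ∈ X. Define the joint state–label function P(s, y) by P(x, y) = p(x) q(y | x) for terminal x ∈ X and P(s, y) = Σ_{s' : (s,s')∈A} p_B(s | s') P(s', y) for non-terminal s. Then the conditional P(y | s) := P(s, y)/p(s) satisfies, for every non-terminal state s and every y ∈ Y, P(y | s) = Σ_{s' : (s,s')∈A} p_F(s' | s) P(y | s'). -/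
open Finset

/-- **GFlowNet classifier consistency, Proposition 2 claim 1.**
Let `pF` be a forward policy with induced, everywhere positive, state-visitation
function `p`, let `pB` be a backward policy (`pB s' s` is the probability
`p_B(s | s')` of predecessor `s` at `s'`) satisfying detailed balance
`p s * pF s s' = p s' * pB s' s` on every edge.  Given nonnegative terminal
conditionals `q` and the joint state–label function `P` defined by
`P x y = p x * q x y` at terminal states and by the backward recursion
`P s y = ∑_{s' : (s,s') ∈ A} pB s' s * P s' y` at non-terminal states, the
conditional `P(y | s) = P s y / p s` satisfies, at every non-terminal `s`,
`P(y | s) = ∑_{s' : (s,s') ∈ A} pF s s' * P(y | s')`. -/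
theorem gflownet_classifier_consistency
    {S Y : Type*} [Fintype S] [Fintype Y]
    (A : S → S → Prop) [DecidableRel A] (s0 : S)
    (hdom : IsGFlowNetDomain A s0)
    (pF : S → S → ℝ) (hpF : IsForwardPolicy A pF)
    (p : S → ℝ) (hp : IsVisitation A s0 pF p) (hppos : ∀ s, 0 < p s)
    (pB : S → S → ℝ)
    (hdb : ∀ s s', A s s' → p s * pF s s' = p s' * pB s' s)
    (q : S → Y → ℝ) (hq : ∀ x y, IsTerminal A x → 0 ≤ q x y)
    (P : S → Y → ℝ)
    (hPterm : ∀ x y, IsTerminal A x → P x y = p x * q x y)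
    (hPrec : ∀ s y, ¬ IsTerminal A s →
      P s y = ∑ s' ∈ univ.filter (fun s' => A s s'), pB s' s * P s' y) :
    ∀ s y, ¬ IsTerminal A s →
      P s y / p s =
        ∑ s' ∈ univ.filter (fun s' => A s s'), pF s s' * (P s' y / p s') := by
  intro s y hs
  rw [hPrec s y hs, Finset.sum_div]
  refine Finset.sum_congr rfl fun s' hs' => ?_
  have hA : A s s' := (Finset.mem_filter.mp hs').2
  have hb := hdb s s' hA
  have h1 : p s ≠ 0 := (hppos s).ne'
  have h2 : p s' ≠ 0 := (hppos s').ne'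
  field_simp
  linear_combination -P s' y * hb
end

section
/- (GFlowNet classifier guidance, Proposition 2 claim 2.) Let p_F be a forward policy on a GFlowNet domain with induced state-visitation function p satisfying p(s) > 0 for all s, and let P(y | s) be a function on states and labels satisfying P(y | s) > 0 for all s and P(y | s) = Σ_{s' : (s,s')∈A} p_F(s' | s) P(y | s') for every non-terminal s. Fix a label y and define the classifier-guided policy p_F(s' | s, y) = p_F(s' | s) · P(y | s')/P(y | s). Then p_F(· | ·, y) is a valid forward policy, and its induced state-visitation function p_y satisfies p_y(s) = p(s) P(y | s)/P(y | s0) for every state s; in particular, at terminal states p_y(x) is proportional to p(x) P(y | x). -/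
open Finset

/-- **GFlowNet classifier guidance, Proposition 2 claim 2.**
Let `pF` be a forward policy with induced, everywhere positive, state-visitation
function `p`, and let `Py` be a positive function of states satisfying
`Py s = ∑_{s' : (s,s') ∈ A} pF s s' * Py s'` at every non-terminal state `s`
(the consistency of the classifier `P(y | ·)` for a fixed label `y`).  Then the
classifier-guided policy `pF(s' | s, y) = pF s s' * Py s' / Py s` is a valid
forward policy, and its induced state-visitation function `py` satisfies
`py s = p s * Py s / Py s0` for every state; in particular at terminal states
`py x` is proportional to `p x * Py x`. -/
theorem gflownet_classifier_guidance
    {S : Type*} [Fintype S]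
    (A : S → S → Prop) [DecidableRel A] (s0 : S)
    (hdom : IsGFlowNetDomain A s0)
    (pF : S → S → ℝ) (hpF : IsForwardPolicy A pF)
    (p : S → ℝ) (hp : IsVisitation A s0 pF p) (hppos : ∀ s, 0 < p s)
    (Py : S → ℝ) (hPypos : ∀ s, 0 < Py s)
    (hPyrec : ∀ s, ¬ IsTerminal A s →
      Py s = ∑ s' ∈ univ.filter (fun s' => A s s'), pF s s' * Py s') :
    IsForwardPolicy A (fun s s' => pF s s' * Py s' / Py s) ∧
    ∀ py : S → ℝ,
      IsVisitation A s0 (fun s s' => pF s s' * Py s' / Py s) py →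
        ∀ s, py s = p s * Py s / Py s0 := by
  obtain ⟨hirr, hnoin, hs0nt⟩ := hdom
  obtain ⟨hnn, hsupp, hsum⟩ := hpF
  obtain ⟨hp0, hprec⟩ := hp
  have hPyne : ∀ s, Py s ≠ 0 := fun s => (hPypos s).ne'
  constructor
  · refine ⟨fun s s' => div_nonneg (mul_nonneg (hnn s s') (hPypos s').le) (hPypos s).le, fun s s' h => by simp [hsupp s s' h], fun s hs => ?_⟩
    rw [← Finset.sum_div]
    rw [div_eq_one_iff_eq (hPyne s)]
    exact (hPyrec s hs).symm
  · intro py ⟨hpy0, hpyrec⟩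
    -- well-founded induction on TransGen A
    haveI : IsTrans S (Relation.TransGen A) := ⟨fun _ _ _ => Relation.TransGen.trans⟩
    haveI : IsIrrefl S (Relation.TransGen A) := ⟨hirr⟩
    have wf : WellFounded (Relation.TransGen A) :=
      Finite.wellFounded_of_trans_of_irrefl _
    intro s
    induction s using wf.induction with
    | _ s ih =>
      by_cases hs : s = s0
      · subst hs
        rw [hpy0, hp0, one_mul, div_self (hPyne _)]
      · rw [hpyrec s hs]
        have : ∀ sp ∈ univ.filter (fun sp => A sp s),
            py sp * (pF sp s * Py s / Py sp)
              = (p sp * pF sp s) * (Py s / Py s0) := by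
          intro sp hsp
          rw [ih sp (Relation.TransGen.single (mem_filter.mp hsp).2)]
          have h1 := hPyne sp
          have h2 := hPyne s0
          field_simp
        rw [Finset.sum_congr rfl this, ← Finset.sum_mul, ← hprec s hs]
        field_simp
end

section
/- (Composed GFlowNet policy, Theorem 1.) Let p_{1,F}, …, p_{m,F} be forward policies on a common GFlowNet domain with induced state-visitation functions p_1, …, p_m satisfying Σ_j p_j(s) > 0 for all s. Let λ_i(s) = p_i(s)/Σ_{j=1}^m p_j(s), and let P(ȳ | s) be a positive function of states (for a fixed observation tuple ȳ = (i_1, …, i_n) ∈ {1,…,m}^n) satisfying P(ȳ | x) = (Π_{k=1}^n p_{i_k}(x)) / (Σ_{j=1}^m p_j(x))^n at terminal states x and P(ȳ | s) = Σ_{s' : (s,s')∈A} [Σ_{i=1}^m λ_i(s) p_{i,F}(s' | s)] P(ȳ | s') at non-terminal states s. Then the forward policy p_F(s' | s, ȳ) = [P(ȳ | s')/P(ȳ | s)] Σ_{i=1}^m p_{i,F}(s' | s) λ_i(s) is valid, and its induced state-visitation function restricted to terminal states equals the composition posterior: for every x ∈ X, p_ȳ(x) = (1/(m · P(ȳ |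 s0))) · (Π_{k=1}^n p_{i_k}(x)) / (Σ_{j=1}^m p_j(x))^{n−1}. -/
open Finset

/-- **Composed GFlowNet policy, Theorem 1.**
Let `pF i` be forward policies with state-visitation functions `p i` such that
`∑ j, p j s > 0` everywhere, let `λ i s = p i s / ∑ j, p j s`, and, for a fixed
observation tuple `ȳ = (ι 1, …, ι n)`, let `P` be a positive function of states
equal to `(∏ k, p (ι k) x) / (∑ j, p j x) ^ n` at terminal states and
satisfying the mixture-policy consistency recursion at non-terminal states.
Then the composed policy
`pF(s' | s, ȳ) = (P s' / P s) * ∑ i, pF i s s' * λ i s` is a valid forward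
policy, and its induced state-visitation function at every terminal state `x`
equals the composition posterior
`(1 / (m * P s0)) * (∏ k, p (ι k) x) / (∑ j, p j x) ^ (n - 1)`. -/
theorem composed_gflownet_policy
    {S : Type*} [Fintype S]
    (A : S → S → Prop) [DecidableRel A] (s0 : S)
    (hdom : IsGFlowNetDomain A s0)
    (m n : ℕ) (hm : 0 < m) (hn : 0 < n)
    (pF : Fin m → S → S → ℝ) (p : Fin m → S → ℝ)
    (hpF : ∀ i, IsForwardPolicy A (pF i))
    (hp : ∀ i, IsVisitation A s0 (pF i) (p i))
    (hpos : ∀ s, 0 < ∑ j, p j s)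
    (ι : Fin n → Fin m)
    (P : S → ℝ) (hPpos : ∀ s, 0 < P s)
    (hPterm : ∀ x, IsTerminal A x →
      P x = (∏ k, p (ι k) x) / (∑ j, p j x) ^ n)
    (hPrec : ∀ s, ¬ IsTerminal A s →
      P s = ∑ s' ∈ univ.filter (fun s' => A s s'),
        (∑ i, (p i s / ∑ j, p j s) * pF i s s') * P s') :
    IsForwardPolicy A
      (fun s s' => (P s' / P s) * ∑ i, pF i s s' * (p i s / ∑ j, p j s)) ∧
    ∀ pc : S → ℝ,
      IsVisitation A s0
        (fun s s' => (P s' / P s) * ∑ i, pF i s s' * (p i s / ∑ j, p j s)) pc →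
      ∀ x, IsTerminal A x →
        pc x = (1 / (m * P s0)) *
          ((∏ k, p (ι k) x) / (∑ j, p j x) ^ (n - 1)) := by
  obtain ⟨hirr, hins0, hs0nt⟩ := hdom
  haveI : IsTrans S (Relation.TransGen A) := ⟨fun _ _ _ => Relation.TransGen.trans⟩
  haveI : IsIrrefl S (Relation.TransGen A) := ⟨hirr⟩
  have hwf : WellFounded (fun a b : S => A a b) :=
    Subrelation.wf (fun h => Relation.TransGen.single h)
      (Finite.wellFounded_of_trans_of_irrefl (Relation.TransGen A))
  -- nonnegativity of visitation functions
  have hpnn : ∀ (i : Fin m) s, 0 ≤ p i s := by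
    intro i s
    induction s using hwf.induction with
    | _ s ih =>
      by_cases hs : s = s0
      · rw [hs, (hp i).1]; norm_num
      · rw [(hp i).2 s hs]
        exact Finset.sum_nonneg fun sp hsp =>
          mul_nonneg (ih sp (Finset.mem_filter.mp hsp).2) ((hpF i).1 sp s)
  constructor
  · refine ⟨?_, ?_, ?_⟩
    · intro s s'
      refine mul_nonneg (div_nonneg (hPpos s').le (hPpos s).le) ?_
      exact Finset.sum_nonneg fun i _ =>
        mul_nonneg ((hpF i).1 s s') (div_nonneg (hpnn i s) (hpos s).le)
    · intro s s' h
      have h0 : ∀ i : Fin m, pF i s s' = 0 := fun i => (hpF i).2.1 s s' h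
      simp [h0]
    · intro s hs
      have hPs := (hPpos s).ne'
      have hstep : ∀ s' ∈ univ.filter (fun s' => A s s'),
          (P s' / P s) * ∑ i, pF i s s' * (p i s / ∑ j, p j s)
          = ((∑ i, (p i s / ∑ j, p j s) * pF i s s') * P s') / P s := by
        intro s' _
        have h1 : (∑ i, pF i s s' * (p i s / ∑ j, p j s))
            = ∑ i, (p i s / ∑ j, p j s) * pF i s s' :=
          Finset.sum_congr rfl fun i _ => mul_comm _ _
        rw [h1]; ring
      rw [Finset.sum_congr rfl hstep, ← Finset.sum_div, ← hPrec s hs, div_self hPs]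
  · intro pc hpc x hx
    have hm0 : (m : ℝ) ≠ 0 := Nat.cast_ne_zero.mpr hm.ne'
    have hP0 : P s0 ≠ 0 := (hPpos s0).ne'
    have key : ∀ s, pc s = (∑ j, p j s) * P s / (m * P s0) := by
      intro s
      induction s using hwf.induction with
      | _ s ih =>
        by_cases hs : s = s0
        · rw [hs, hpc.1]
          have h1 : (∑ j, p j s0) = (m : ℝ) := by
            rw [Finset.sum_congr rfl fun j _ => (hp j).1]
            simp
          rw [h1]
          field_simp
        · rw [hpc.2 s hs]
          have hstep : ∀ sp ∈ univ.filter (fun sp => A sp s),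
              pc sp * ((P s / P sp) * ∑ i, pF i sp s * (p i sp / ∑ j, p j sp))
              = (∑ i, p i sp * pF i sp s) * P s / (m * P s0) := by
            intro sp hsp
            rw [ih sp (Finset.mem_filter.mp hsp).2]
            have h1 : P sp ≠ 0 := (hPpos sp).ne'
            have h2 : (∑ j, p j sp) ≠ 0 := (hpos sp).ne'
            have hD : (∑ i, pF i sp s * (p i sp / ∑ j, p j sp))
                = (∑ i, p i sp * pF i sp s) / (∑ j, p j sp) := by
              rw [Finset.sum_div]
              exact Finset.sum_congr rfl fun i _ => by ring
            rw [hD]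
            field_simp
          rw [Finset.sum_congr rfl hstep, ← Finset.sum_div, ← Finset.sum_mul]
          congr 2
          rw [Finset.sum_comm]
          exact Finset.sum_congr rfl fun i _ => ((hp i).2 s hs).symm
    rw [key x, hPterm x hx]
    obtain ⟨n', rfl⟩ : ∃ n', n = n' + 1 := ⟨n - 1, (Nat.succ_pred_eq_of_pos hn).symm⟩
    have hS : (∑ j, p j x) ≠ 0 := (hpos x).ne'
    simp only [Nat.add_sub_cancel]
    field_simp
    ring
end

section
/- (Proposition B.1, claim 2: the negation of Gaussians can be non-normalizable.) Let γ ∈ (0,1), μ1, μ2 ∈ ℝ, and σ1, σ2 > 0 satisfy σ1² ≥ σ2²/γ. Let p_i(x) = (1/√(2π σ_i²)) exp(−(x−μ_i)²/(2σ_i²)) for i = 1, 2 be the Gaussian probability density functions. Then ∫_ℝ p1(x)/(p2(x))^γ dx = ∞, i.e. the function p1/p2^γ is not integrable over ℝ. -/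
open MeasureTheory Real

/-- **Proposition B.1, claim 2.** Let `γ ∈ (0,1)` and let
`p1, p2` be Gaussian densities with means `μ1, μ2` and variances `σ1², σ2²`
satisfying `σ1² ≥ σ2²/γ`.  Then the negation `p1 / p2 ^ γ` has infinite
integral over `ℝ`, i.e. it is not integrable (the function being nonnegative,
this is expressed via the Lebesgue integral of its `ℝ≥0∞`-coercion being `∞`
and via failure of integrability). -/
theorem gaussian_negation_not_normalizable
    (γ μ1 μ2 σ1 σ2 : ℝ) (hγ : γ ∈ Set.Ioo (0 : ℝ) 1)
    (hσ1 : 0 < σ1) (hσ2 : 0 < σ2)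
    (hvar : σ2 ^ 2 / γ ≤ σ1 ^ 2) :
    (∫⁻ x : ℝ, ENNReal.ofReal
        (((1 / Real.sqrt (2 * π * σ1 ^ 2)) * Real.exp (-(x - μ1) ^ 2 / (2 * σ1 ^ 2))) /
          ((1 / Real.sqrt (2 * π * σ2 ^ 2)) * Real.exp (-(x - μ2) ^ 2 / (2 * σ2 ^ 2))) ^ γ)
      = ⊤) ∧
    ¬ Integrable (fun x : ℝ =>
        ((1 / Real.sqrt (2 * π * σ1 ^ 2)) * Real.exp (-(x - μ1) ^ 2 / (2 * σ1 ^ 2))) /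
          ((1 / Real.sqrt (2 * π * σ2 ^ 2)) * Real.exp (-(x - μ2) ^ 2 / (2 * σ2 ^ 2))) ^ γ) := by
  obtain ⟨hγ0, hγ1⟩ := hγ
  have hπ : (0:ℝ) < π := Real.pi_pos
  set f : ℝ → ℝ := fun x =>
      ((1 / Real.sqrt (2 * π * σ1 ^ 2)) * Real.exp (-(x - μ1) ^ 2 / (2 * σ1 ^ 2))) /
        ((1 / Real.sqrt (2 * π * σ2 ^ 2)) * Real.exp (-(x - μ2) ^ 2 / (2 * σ2 ^ 2))) ^ γ with hf
  have hs1 : 0 < Real.sqrt (2*π*σ1^2) := Real.sqrt_pos.mpr (by positivity)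
  have hs2 : 0 < Real.sqrt (2*π*σ2^2) := Real.sqrt_pos.mpr (by positivity)
  set C : ℝ := Real.sqrt (2*π*σ2^2) ^ γ / Real.sqrt (2*π*σ1^2) with hC
  have hCpos : 0 < C := by positivity
  set a : ℝ := γ/(2*σ2^2) - 1/(2*σ1^2) with ha
  set b : ℝ := μ1/σ1^2 - γ*μ2/σ2^2 with hb
  set c : ℝ := -μ1^2/(2*σ1^2) + γ*μ2^2/(2*σ2^2) with hc
  have ha0 : 0 ≤ a := by
    rw [ha]
    have h1 : σ2^2 ≤ γ * σ1^2 := by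
      rw [div_le_iff₀ hγ0] at hvar; linarith [hvar]
    rw [sub_nonneg, div_le_div_iff₀ (by positivity) (by positivity)]
    nlinarith
  have hrw : ∀ x, f x = C * Real.exp (a*x^2 + b*x + c) := by
    intro x
    have h1 : ((1 / Real.sqrt (2*π*σ2^2)) * Real.exp (-(x-μ2)^2/(2*σ2^2))) ^ γ
        = (1/Real.sqrt (2*π*σ2^2))^γ * Real.exp (γ * (-(x-μ2)^2/(2*σ2^2))) := by
      rw [Real.mul_rpow (by positivity) (Real.exp_pos _).le, ← Real.exp_mul]
      ring_nf
    have hE : -(x-μ1)^2/(2*σ1^2) - γ * (-(x-μ2)^2/(2*σ2^2)) = a*x^2 + b*x + c := by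
      rw [ha, hb, hc]; field_simp; ring
    rw [hf]
    simp only
    rw [h1, ← hE, hC, Real.exp_sub, Real.div_rpow (by positivity) hs2.le, Real.one_rpow]
    rw [div_mul_eq_div_div]
    field_simp
  have hfpos : ∀ x, 0 < f x := fun x => by rw [hrw]; positivity
  -- choose the half-line
  obtain ⟨S, hSmeas, hSvol, hS⟩ : ∃ S : Set ℝ, MeasurableSet S ∧ volume S = ⊤ ∧
      ∀ x ∈ S, C * Real.exp c ≤ f x := by
    rcases le_or_gt 0 b with hb0 | hb0
    · refine ⟨Set.Ici 0, measurableSet_Ici, Real.volume_Ici, fun x hx => ?_⟩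
      rw [hrw]
      have hbx : 0 ≤ b * x := mul_nonneg hb0 hx
      have : c ≤ a*x^2 + b*x + c := by nlinarith [mul_nonneg ha0 (sq_nonneg x)]
      exact mul_le_mul_of_nonneg_left (Real.exp_le_exp.mpr this) hCpos.le
    · refine ⟨Set.Iic 0, measurableSet_Iic, Real.volume_Iic, fun x hx => ?_⟩
      rw [hrw]
      have hx' : x ≤ 0 := hx
      have hbx : 0 ≤ b * x := by nlinarith
      have : c ≤ a*x^2 + b*x + c := by nlinarith [mul_nonneg ha0 (sq_nonneg x)]
      exact mul_le_mul_of_nonneg_left (Real.exp_le_exp.mpr this) hCpos.le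
  have key : (∫⁻ x : ℝ, ENNReal.ofReal (f x)) = ⊤ := by
    refine eq_top_iff.mpr ?_
    calc (⊤ : ENNReal) = (∫⁻ x in S, ENNReal.ofReal (C * Real.exp c)) := by
          rw [setLIntegral_const, hSvol, ENNReal.mul_top]
          simp only [ne_eq, ENNReal.ofReal_eq_zero, not_le]
          positivity
      _ ≤ (∫⁻ x in S, ENNReal.ofReal (f x)) :=
          setLIntegral_mono' hSmeas fun x hx => ENNReal.ofReal_le_ofReal (hS x hx)
      _ ≤ (∫⁻ x : ℝ, ENNReal.ofReal (f x)) := setLIntegral_le_lintegral _ _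
  refine ⟨key, fun hint => ?_⟩
  have h2 := hint.2
  rw [hasFiniteIntegral_iff_norm] at h2
  have : (∫⁻ x : ℝ, ENNReal.ofReal (f x)) < ⊤ := by
    refine lt_of_le_of_lt (lintegral_mono fun x => ?_) h2
    exact ENNReal.ofReal_le_ofReal (le_abs_self _)
  rw [key] at this
  exact absurd this (by simp)
end
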